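/- Let $\Omega$ be a real symmetric $n\times n$ matrix with nonnegative entries and zero diagonal, and let $M$ be a product of the matrices $Q_i = I + D_i\Omega$ in which every index $1,\dots,n$ appears at least once. If $v \in \mathbb{R}^n$ satisfies $Mv - v \in \ker(\Omega)$, then $v \in \ker(\Omega)$. Consequently, $1$ is not an eigenvalue of the induced map of $M$ on $\mathbb{R}^n/\ker(\Omega)$. -/

import Mathlib

open Matrix

section Aux

variable {n : ℕ} (Ω : Matrix (Fin n) (Fin n) ℝ)

lemma aux_sym (hsymm : Ω.IsSymm) (u w : Fin n → ℝ) :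
    u ⬝ᵥ Ω.mulVec w = w ⬝ᵥ Ω.mulVec u := by
  rw [Matrix.dotProduct_mulVec]
  nth_rewrite 1 [← hsymm.eq]
  rw [Matrix.vecMul_transpose, dotProduct_comm]

lemma aux_Qmul (i : Fin n) (u : Fin n → ℝ) :
    (1 + Matrix.single i i 1 * Ω).mulVec u
      = u + (Ω.mulVec u i) • (Pi.single i 1 : Fin n → ℝ) := by
  rw [Matrix.add_mulVec, Matrix.one_mulVec, ← Matrix.mulVec_mulVec,
    Matrix.single_mulVec]
  funext j
  simp [Function.update, Pi.single_apply, eq_comm]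

lemma aux_g_single (hdiag : ∀ i, Ω i i = 0) (hsymm : Ω.IsSymm) (i : Fin n) (u : Fin n → ℝ)
    (t : ℝ) :
    (u + t • (Pi.single i 1 : Fin n → ℝ)) ⬝ᵥ Ω.mulVec (u + t • (Pi.single i 1 : Fin n → ℝ))
      = u ⬝ᵥ Ω.mulVec u + 2 * t * (Ω.mulVec u i) := by
  have e1 : (Pi.single i 1 : Fin n → ℝ) ⬝ᵥ Ω.mulVec u = Ω.mulVec u i := by
    simp [dotProduct, Pi.single_apply]
  have e2 : (Pi.single i 1 : Fin n → ℝ) ⬝ᵥ Ω.mulVec (Pi.single i 1) = Ω i i := by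
    simp [Matrix.mulVec_single, dotProduct, Pi.single_apply]
  have e3 : u ⬝ᵥ Ω.mulVec (Pi.single i 1) = Ω.mulVec u i := by
    rw [aux_sym Ω hsymm, e1]
  simp only [Matrix.mulVec_add, Matrix.mulVec_smul, dotProduct_add, add_dotProduct,
    smul_dotProduct, dotProduct_smul, smul_eq_mul, e1, e2, e3, hdiag i]
  ring

/-- key induction lemma -/
lemma aux_main (hsymm : Ω.IsSymm) (hdiag : ∀ i, Ω i i = 0) (l : List (Fin n)) (v : Fin n → ℝ) :
    v ⬝ᵥ Ω.mulVec v ≤ (((l.map (fun i => 1 + Matrix.single i i 1 * Ω)).prod).mulVec v) ⬝ᵥ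
        Ω.mulVec (((l.map (fun i => 1 + Matrix.single i i 1 * Ω)).prod).mulVec v) ∧
      ((((l.map (fun i => 1 + Matrix.single i i 1 * Ω)).prod).mulVec v) ⬝ᵥ
          Ω.mulVec (((l.map (fun i => 1 + Matrix.single i i 1 * Ω)).prod).mulVec v)
          ≤ v ⬝ᵥ Ω.mulVec v →
        (((l.map (fun i => 1 + Matrix.single i i 1 * Ω)).prod).mulVec v) = v ∧
          ∀ i ∈ l, Ω.mulVec v i = 0) := by
  induction l with
  | nil => exact ⟨by simp [Matrix.one_mulVec], fun _ => ⟨by simp [Matrix.one_mulVec], by simp⟩⟩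
  | cons i l ih =>
    set u := ((l.map (fun i => 1 + Matrix.single i i 1 * Ω)).prod).mulVec v with hu
    set w := ((((i :: l).map (fun i => 1 + Matrix.single i i 1 * Ω)).prod).mulVec v)
      with hwdef
    have hw : w = u + (Ω.mulVec u i) • (Pi.single i 1 : Fin n → ℝ) := by
      rw [hwdef, List.map_cons, List.prod_cons, ← Matrix.mulVec_mulVec, ← hu]
      exact aux_Qmul Ω i u
    set t := Ω.mulVec u i with ht
    have hg : w ⬝ᵥ Ω.mulVec w = u ⬝ᵥ Ω.mulVec u + 2 * t * t := by
      rw [hw]; exact aux_g_single Ω hdiag hsymm i u t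
    have h2 : u ⬝ᵥ Ω.mulVec u ≤ w ⬝ᵥ Ω.mulVec w := by
      rw [hg]; nlinarith [sq_nonneg t]
    constructor
    · exact le_trans ih.1 h2
    · intro hle
      have hgu : u ⬝ᵥ Ω.mulVec u ≤ v ⬝ᵥ Ω.mulVec v := le_trans h2 hle
      obtain ⟨huv, hl⟩ := ih.2 hgu
      have ht0 : t = 0 := by
        have h1 := ih.1
        rw [hg] at hle
        nlinarith [sq_nonneg t]
      have hwv : w = v := by rw [hw, ht0]; simp [huv]
      refine ⟨hwv, fun j hj => ?_⟩
      rcases List.mem_cons.1 hj with rfl | hj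
      · rw [← ht0, ht, huv]
      · exact hl j hj

end Aux

theorem stmt14 {n : ℕ} (Ω : Matrix (Fin n) (Fin n) ℝ) (hsymm : Ω.IsSymm)
    (hnn : ∀ a b, 0 ≤ Ω a b) (hdiag : ∀ i, Ω i i = 0)
    (l : List (Fin n)) (hall : ∀ i : Fin n, i ∈ l) (v : Fin n → ℝ)
    (h : Ω.mulVec
      (((l.map (fun i => 1 + Matrix.single i i 1 * Ω)).prod).mulVec v - v) = 0) :
    Ω.mulVec v = 0 := by
  set w := ((l.map (fun i => 1 + Matrix.single i i 1 * Ω)).prod).mulVec v with hw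
  have hΩw : Ω.mulVec w = Ω.mulVec v := by
    have h2 := Matrix.mulVec_sub Ω w v
    rw [h] at h2
    exact sub_eq_zero.mp h2.symm
  have hg : w ⬝ᵥ Ω.mulVec w = v ⬝ᵥ Ω.mulVec v := by
    rw [hΩw]
    have hd : w = v + (w - v) := by abel
    rw [hd, add_dotProduct]
    have hsw : (w - v) ⬝ᵥ Ω.mulVec v = v ⬝ᵥ Ω.mulVec (w - v) := aux_sym Ω hsymm _ _
    rw [hsw, h]
    simp
  have hmain := (aux_main Ω hsymm hdiag l v).2 (le_of_eq (by rw [← hw]; exact hg))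
  funext i
  simpa using hmain.2 i (hall i)
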